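/- (Kallin's lemma, half-plane version) Let K and L be compact polynomially convex subsets of ℂ^N, and suppose there is a polynomial f such that f(K) is contained in {Re w ≥ 0} and f(L) is contained in {Re w ≤ -δ} for some δ > 0. Then K ∪ L is polynomially convex. -/

import Mathlib

open MvPolynomial

noncomputable def polyHull {N : ℕ} (K : Set (Fin N → ℂ)) : Set (Fin N → ℂ) :=
  {z | ∀ p : MvPolynomial (Fin N) ℂ,
    ‖eval z p‖ ≤ sSup ((fun x => ‖eval x p‖) '' K)}

def IsPolyConvex {N : ℕ} (K : Set (Fin N → ℂ)) : Prop := polyHull K = K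

def rationalHull {N : ℕ} (K : Set (Fin N → ℂ)) : Set (Fin N → ℂ) :=
  {z | ∀ p : MvPolynomial (Fin N) ℂ, eval z p = 0 → ∃ x ∈ K, eval x p = 0}

noncomputable def polyHull1 (S : Set ℂ) : Set ℂ :=
  {w | ∀ p : Polynomial ℂ, ‖p.eval w‖ ≤ sSup ((fun s => ‖p.eval s‖) '' S)}

noncomputable def PX {N : ℕ} (X : Set (Fin N → ℂ)) : Set C(X, ℂ) :=
  closure {f : C(X, ℂ) | ∃ p : MvPolynomial (Fin N) ℂ,
    ∀ x : X, f x = eval (x : Fin N → ℂ) p}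

def SameGleasonPart {N : ℕ} (H : Set (Fin N → ℂ)) (x y : Fin N → ℂ) : Prop :=
  ∃ c ≥ (1 : ℝ), ∀ p : MvPolynomial (Fin N) ℂ,
    (∀ z ∈ H, (eval z p).re ≤ 0) →
    c * (eval y p).re ≤ (eval x p).re ∧ c * (eval x p).re ≤ (eval y p).re

set_option linter.unusedVariables false
noncomputable section KallinAux



/-- the union of the two half-disk regions -/
def Sset (R d : ℝ) : Set ℂ := {w | ‖w‖ ≤ R ∧ d/2 ≤ |w.re|}

/-- uniformly approximable by polynomials on `Sset R d` -/
def Apx (R d : ℝ) (g : ℂ → ℂ) : Prop :=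
  ∀ ε > 0, ∃ q : Polynomial ℂ, ∀ w ∈ Sset R d, ‖g w - q.eval w‖ ≤ ε

variable {R d : ℝ}

lemma apx_poly (q : Polynomial ℂ) : Apx R d (fun w => q.eval w) := by
  intro ε hε; exact ⟨q, fun w _ => by simp [hε.le]⟩

lemma apx_const (c : ℂ) : Apx R d (fun _ => c) := by
  simpa using apx_poly (R := R) (d := d) (Polynomial.C c)

lemma apx_add {g h : ℂ → ℂ} (hg : Apx R d g) (hh : Apx R d h) :
    Apx R d (fun w => g w + h w) := by
  intro ε hε
  obtain ⟨q1, h1⟩ := hg (ε/2) (by positivity)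
  obtain ⟨q2, h2⟩ := hh (ε/2) (by positivity)
  refine ⟨q1 + q2, fun w hw => ?_⟩
  have := h1 w hw; have := h2 w hw
  simp only [Polynomial.eval_add]
  calc ‖g w + h w - (q1.eval w + q2.eval w)‖
      = ‖(g w - q1.eval w) + (h w - q2.eval w)‖ := by ring_nf
    _ ≤ ‖g w - q1.eval w‖ + ‖h w - q2.eval w‖ := norm_add_le _ _
    _ ≤ ε/2 + ε/2 := add_le_add (h1 w hw) (h2 w hw)
    _ = ε := by ring

lemma poly_bdd (hR : 0 ≤ R) (q : Polynomial ℂ) :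
    ∃ M, 0 ≤ M ∧ ∀ w ∈ Sset R d, ‖q.eval w‖ ≤ M := by
  obtain ⟨M, hM⟩ := (isCompact_closedBall (0:ℂ) R).exists_bound_of_continuousOn
    (Continuous.continuousOn (by continuity : Continuous fun w : ℂ => q.eval w))
  refine ⟨max M 0, le_max_right _ _, fun w hw => ?_⟩
  exact le_trans (hM w (by simpa [Metric.mem_closedBall, dist_eq_norm] using hw.1))
    (le_max_left _ _)

lemma apx_bdd {g : ℂ → ℂ} (hR : 0 ≤ R) (hg : Apx R d g) :
    ∃ M, 0 ≤ M ∧ ∀ w ∈ Sset R d, ‖g w‖ ≤ M := by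
  obtain ⟨q, hq⟩ := hg 1 one_pos
  obtain ⟨M, hM0, hM⟩ := poly_bdd (d := d) hR q
  refine ⟨M + 1, by linarith, fun w hw => ?_⟩
  calc ‖g w‖ = ‖(g w - q.eval w) + q.eval w‖ := by ring_nf
    _ ≤ ‖g w - q.eval w‖ + ‖q.eval w‖ := norm_add_le _ _
    _ ≤ 1 + M := add_le_add (hq w hw) (hM w hw)
    _ = M + 1 := by ring

lemma apx_mul {g h : ℂ → ℂ} (hR : 0 ≤ R) (hg : Apx R d g) (hh : Apx R d h) :
    Apx R d (fun w => g w * h w) := by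
  obtain ⟨Mg, hMg0, hMg⟩ := apx_bdd hR hg
  obtain ⟨Mh, hMh0, hMh⟩ := apx_bdd hR hh
  intro ε hε
  set ε' := min 1 (ε / (Mg + Mh + 2)) with hε'def
  have hε'pos : 0 < ε' := lt_min one_pos (by positivity)
  obtain ⟨q1, h1⟩ := hg ε' hε'pos
  obtain ⟨q2, h2⟩ := hh ε' hε'pos
  refine ⟨q1 * q2, fun w hw => ?_⟩
  have e1 := h1 w hw; have e2 := h2 w hw
  have hq2 : ‖q2.eval w‖ ≤ Mh + ε' := by
    calc ‖q2.eval w‖ = ‖h w - (h w - q2.eval w)‖ := by ring_nf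
      _ ≤ ‖h w‖ + ‖h w - q2.eval w‖ := norm_sub_le _ _
      _ ≤ Mh + ε' := add_le_add (hMh w hw) e2
  have key : g w * h w - (q1*q2).eval w
      = g w * (h w - q2.eval w) + (g w - q1.eval w) * q2.eval w := by
    simp only [Polynomial.eval_mul]; ring
  rw [key]
  have hε'1 : ε' ≤ 1 := min_le_left _ _
  have hε'2 : ε' ≤ ε / (Mg + Mh + 2) := min_le_right _ _
  calc ‖g w * (h w - q2.eval w) + (g w - q1.eval w) * q2.eval w‖
      ≤ ‖g w‖ * ‖h w - q2.eval w‖ + ‖g w - q1.eval w‖ * ‖q2.eval w‖ := by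
        refine le_trans (norm_add_le _ _) ?_
        simp [norm_mul]
    _ ≤ Mg * ε' + ε' * (Mh + ε') := by
        refine add_le_add (mul_le_mul (hMg w hw) e2 (norm_nonneg _) hMg0) ?_
        exact mul_le_mul e1 hq2 (norm_nonneg _) hε'pos.le
    _ ≤ Mg * ε' + ε' * (Mh + 1) := by nlinarith
    _ = ε' * (Mg + Mh + 1) := by ring
    _ ≤ (ε / (Mg + Mh + 2)) * (Mg + Mh + 2) := by nlinarith
    _ = ε := by field_simp

lemma apx_pow {g : ℂ → ℂ} (hR : 0 ≤ R) (hg : Apx R d g) (k : ℕ) :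
    Apx R d (fun w => (g w) ^ k) := by
  induction k with
  | zero => simpa using apx_const (R := R) (d := d) 1
  | succ k ih =>
      have := apx_mul hR ih hg
      simpa [pow_succ] using this

lemma apx_closure {g : ℂ → ℂ}
    (h : ∀ δ > (0:ℝ), ∃ h' : ℂ → ℂ, Apx R d h' ∧ ∀ w ∈ Sset R d, ‖g w - h' w‖ ≤ δ) :
    Apx R d g := by
  intro ε hε
  obtain ⟨h', hh', hclose⟩ := h (ε/2) (by positivity)
  obtain ⟨q, hq⟩ := hh' (ε/2) (by positivity)
  refine ⟨q, fun w hw => ?_⟩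
  calc ‖g w - q.eval w‖ = ‖(g w - h' w) + (h' w - q.eval w)‖ := by ring_nf
    _ ≤ ‖g w - h' w‖ + ‖h' w - q.eval w‖ := norm_add_le _ _
    _ ≤ ε/2 + ε/2 := add_le_add (hclose w hw) (hq w hw)
    _ = ε := by ring





lemma Sset_re_ne (hd : 0 < d) {w : ℂ} (hw : w ∈ Sset R d) {b : ℂ} (hb : b.re = 0) :
    w - b ≠ 0 := by
  intro h
  have hre : (w - b).re = w.re := by rw [Complex.sub_re, hb, sub_zero]
  rw [h] at hre
  simp only [Complex.zero_re] at hre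
  have := hw.2; rw [← hre] at this; simp at this; linarith

lemma Sset_dist (hd : 0 < d) {w : ℂ} (hw : w ∈ Sset R d) {b : ℂ} (hb : b.re = 0) :
    d/2 ≤ ‖w - b‖ := by
  have h1 : |(w - b).re| ≤ ‖w - b‖ := Complex.abs_re_le_norm _
  have h2 : (w - b).re = w.re := by rw [Complex.sub_re, hb, sub_zero]
  rw [h2] at h1
  exact le_trans hw.2 h1

lemma res_bdd (hd : 0 < d) {b : ℂ} (hb : b.re = 0) {w : ℂ} (hw : w ∈ Sset R d) :
    ‖(w - b)⁻¹‖ ≤ 2/d := by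
  have h := Sset_dist hd hw hb
  have hpos : (0:ℝ) < d/2 := by positivity
  rw [norm_inv, inv_le_comm₀ (lt_of_lt_of_le hpos h) (by positivity)]
  calc (2/d)⁻¹ = d/2 := by rw [inv_div]
    _ ≤ ‖w - b‖ := h

lemma apx_res_far (hR : 0 ≤ R) (hd : 0 < d) {b : ℂ} (hb : 2*R + 2 ≤ ‖b‖) :
    Apx R d (fun w => (w - b)⁻¹) := by
  intro ε hε
  obtain ⟨m, hm⟩ := exists_pow_lt_of_lt_one hε (by norm_num : (1:ℝ)/2 < 1)
  refine ⟨∑ k ∈ Finset.range m, Polynomial.C (-(b^(k+1))⁻¹) * Polynomial.X^k,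
    fun w hw => ?_⟩
  have hw1 : ‖w‖ ≤ R := hw.1
  have hbne : b ≠ 0 := by
    intro h; rw [h, norm_zero] at hb; linarith
  have hwb : ‖w‖ < ‖b‖ := lt_of_le_of_lt hw.1 (by linarith)
  have hwbne : w - b ≠ 0 := by
    intro h
    rw [sub_eq_zero] at h
    rw [h] at hwb; exact lt_irrefl _ hwb
  have heval : Polynomial.eval w (∑ k ∈ Finset.range m,
      Polynomial.C (-(b^(k+1))⁻¹) * Polynomial.X^k)
      = ∑ k ∈ Finset.range m, -(b^(k+1))⁻¹ * w^k := by
    rw [Polynomial.eval_finset_sum]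
    simp
  rw [heval]
  have key : ∀ m : ℕ, (w - b)⁻¹ - ∑ k ∈ Finset.range m, -(b^(k+1))⁻¹ * w^k
      = (w/b)^m * (w - b)⁻¹ := by
    intro m
    induction m with
    | zero => simp
    | succ m ih =>
        rw [Finset.sum_range_succ, ← sub_sub, ih]
        rw [div_pow, div_pow]
        field_simp
        ring
  rw [key m]
  have h1 : ‖w/b‖ ≤ 1/2 := by
    rw [norm_div, div_le_div_iff₀ (lt_of_lt_of_le (by linarith) hb) (by norm_num)]
    linarith
  have h2 : ‖(w - b)⁻¹‖ ≤ 1 := by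
    rw [norm_inv]
    have : (1:ℝ) ≤ ‖w - b‖ := by
      have := norm_sub_norm_le b w
      rw [norm_sub_rev] at this
      linarith
    rw [inv_le_one_iff₀]; right; exact this
  calc ‖(w/b)^m * (w-b)⁻¹‖ = ‖w/b‖^m * ‖(w-b)⁻¹‖ := by rw [norm_mul, norm_pow]
    _ ≤ (1/2)^m * 1 := by
        refine mul_le_mul (pow_le_pow_left₀ (norm_nonneg _) h1 m) h2 (norm_nonneg _)
          (by positivity)
    _ = (1/2)^m := by ring
    _ ≤ ε := (hm).le



lemma apx_finsetSum {ι : Type*} (s : Finset ι) (F : ι → ℂ → ℂ)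
    (h : ∀ i ∈ s, Apx R d (F i)) : Apx R d (fun w => ∑ i ∈ s, F i w) := by
  classical
  induction s using Finset.induction_on with
  | empty => simpa using apx_const (R := R) (d := d) 0
  | insert a s hni ih =>
      have h1 : Apx R d (F a) := h a (Finset.mem_insert_self a s)
      have h2 : Apx R d (fun w => ∑ i ∈ s, F i w) :=
        ih (fun i hi => h i (Finset.mem_insert_of_mem hi))
      have := apx_add h1 h2
      refine fun ε hε => ?_
      obtain ⟨q, hq⟩ := this ε hε
      exact ⟨q, fun w hw => by
        simpa [Finset.sum_insert hni] using hq w hw⟩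

lemma apx_res_push (hR : 0 ≤ R) (hd : 0 < d) {b b' : ℂ} (hb : b.re = 0)
    (hb' : b'.re = 0) (hclose : ‖b - b'‖ ≤ d/4)
    (hres : Apx R d (fun w => (w - b')⁻¹)) :
    Apx R d (fun w => (w - b)⁻¹) := by
  refine apx_closure (fun δ hδ => ?_)
  obtain ⟨m, hm⟩ := exists_pow_lt_of_lt_one (show (0:ℝ) < δ * d / 2 by positivity)
    (by norm_num : (1:ℝ)/2 < 1)
  refine ⟨fun w => ∑ k ∈ Finset.range m, (b - b')^k * ((w - b')⁻¹)^(k+1), ?_, ?_⟩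
  · refine apx_finsetSum _ _ (fun k _ => ?_)
    have hpow := apx_pow hR (fun ε hε => hres ε hε) (k+1)
    have := apx_mul hR (apx_const ((b - b')^k)) hpow
    exact this
  · intro w hw
    have hwb : w - b ≠ 0 := Sset_re_ne hd hw hb
    have hwb' : w - b' ≠ 0 := Sset_re_ne hd hw hb'
    have key : ∀ m : ℕ, (w - b)⁻¹ - ∑ k ∈ Finset.range m, (b - b')^k * ((w - b')⁻¹)^(k+1)
        = ((b - b')/(w - b'))^m * (w - b)⁻¹ := by
      intro m
      induction m with
      | zero => simp
      | succ m ih =>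
          rw [Finset.sum_range_succ, ← sub_sub, ih]
          rw [div_pow, div_pow, inv_pow]
          field_simp
          ring
    rw [key m]
    have h1 : ‖(b - b')/(w - b')‖ ≤ 1/2 := by
      rw [norm_div]
      have h2 := Sset_dist hd hw hb'
      have h3 : (0:ℝ) < ‖w - b'‖ := lt_of_lt_of_le (by positivity) h2
      rw [div_le_div_iff₀ h3 (by norm_num : (0:ℝ) < 2), one_mul]
      linarith
    have h2 : ‖(w - b)⁻¹‖ ≤ 2/d := res_bdd hd hb hw
    calc ‖((b - b')/(w - b'))^m * (w - b)⁻¹‖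
        = ‖(b - b')/(w - b')‖^m * ‖(w - b)⁻¹‖ := by rw [norm_mul, norm_pow]
      _ ≤ (1/2)^m * (2/d) := by
          refine mul_le_mul (pow_le_pow_left₀ (norm_nonneg _) h1 m) h2 (norm_nonneg _)
            (by positivity)
      _ ≤ (δ * d / 2) * (2/d) := by
          refine mul_le_mul_of_nonneg_right hm.le (by positivity)
      _ = δ := by field_simp

lemma apx_res (hR : 0 ≤ R) (hd : 0 < d) {b : ℂ} (hb : b.re = 0) :
    Apx R d (fun w => (w - b)⁻¹) := by
  suffices H : ∀ k : ℕ, ∀ b : ℂ, b.re = 0 → 2*R + 2 ≤ ‖b‖ + k * (d/4) →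
      Apx R d (fun w => (w - b)⁻¹) by
    obtain ⟨k, hk⟩ := exists_nat_ge ((2*R + 2)/(d/4))
    refine H k b hb ?_
    have : 2*R + 2 ≤ k * (d/4) := by
      rw [div_le_iff₀ (by positivity)] at hk
      linarith
    linarith [norm_nonneg b]
  intro k
  induction k with
  | zero => intro b hb hfar; exact apx_res_far hR hd (by simpa using hfar)
  | succ k ih =>
      intro b hb hfar
      by_cases hcase : 2*R + 2 ≤ ‖b‖
      · exact apx_res_far hR hd hcase
      · have normIm : ∀ z : ℂ, z.re = 0 → ‖z‖ = |z.im| := by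
          intro z hz
          rw [Complex.norm_def, Complex.normSq_apply, hz]
          rw [show (0:ℝ)*0 + z.im*z.im = z.im*z.im by ring, Real.sqrt_mul_self_eq_abs]
        set c : ℝ := if 0 ≤ b.im then (d/4) else (-(d/4)) with hcdef
        set b' : ℂ := b + Complex.I * (c:ℝ) with hb'def
        have hb're : b'.re = 0 := by
          rw [hb'def]; simp [Complex.add_re, hb, Complex.mul_re]
        have hb'im : b'.im = b.im + c := by
          rw [hb'def]; simp [Complex.add_im, Complex.mul_im]
        have hdist : ‖b - b'‖ = d/4 := by
          have hbb : b - b' = -(Complex.I * (c:ℝ)) := by rw [hb'def]; ring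
          rw [hbb, norm_neg, norm_mul, Complex.norm_I, one_mul, Complex.norm_real,
            Real.norm_eq_abs, hcdef]
          split
          · exact abs_of_nonneg (by linarith)
          · rw [abs_of_neg (by linarith)]; ring
        have hnormb' : ‖b'‖ = ‖b‖ + d/4 := by
          rw [normIm b hb, normIm b' hb're, hb'im]
          rcases le_or_gt 0 b.im with hsgn|hsgn
          · rw [hcdef]; rw [if_pos hsgn, abs_of_nonneg hsgn, abs_of_nonneg (by linarith)]
          · rw [hcdef]; rw [if_neg (not_le.mpr hsgn), abs_of_neg hsgn, abs_of_neg (by linarith)]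
            ring
        refine apx_res_push hR hd hb hb're hdist.le (ih b' hb're ?_)
        rw [hnormb']
        push_cast at hfar ⊢
        linarith

lemma apx_multiset_prod (hR : 0 ≤ R) (hd : 0 < d) (s : Multiset ℂ)
    (h : ∀ r ∈ s, r.re = 0) :
    Apx R d (fun w => ((s.map (fun r => (w - r)⁻¹)).prod)) := by
  induction s using Multiset.induction_on with
  | empty => simpa using apx_const (R := R) (d := d) 1
  | cons a s ih =>
      have h1 : Apx R d (fun w => (w - a)⁻¹) :=
        apx_res hR hd (h a (Multiset.mem_cons_self a s))
      have h2 := ih (fun r hr => h r (Multiset.mem_cons_of_mem hr))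
      have := apx_mul hR h1 h2
      intro ε hε
      obtain ⟨q, hq⟩ := this ε hε
      exact ⟨q, fun w hw => by simpa [Multiset.map_cons, Multiset.prod_cons] using hq w hw⟩

lemma quadA {Rr x y : ℝ} (hw2 : x*x + y*y ≤ Rr^2) (hx : x ≤ Rr) (hR : 0 ≤ Rr) :
    (Rr + 1 + x)*(Rr + 1 + x) + y*y ≤ (2*Rr+1)^2 := by nlinarith

lemma quadB {Rr x y : ℝ} (hw2 : x*x + y*y ≤ Rr^2) (hx : -Rr ≤ x) (hR : 0 ≤ Rr) :
    (Rr + 1 - x)*(Rr + 1 - x) + y*y ≤ (2*Rr+1)^2 := by nlinarith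

set_option maxHeartbeats 2000000 in
lemma star (R d : ℝ) (hR : 0 ≤ R) (hd : 0 < d) {ε : ℝ} (hε : 0 < ε) :
    ∃ q : Polynomial ℂ,
      (∀ w : ℂ, ‖w‖ ≤ R → d/2 ≤ w.re → ‖q.eval w - 1‖ ≤ ε) ∧
      (∀ w : ℂ, ‖w‖ ≤ R → w.re ≤ -(d/2) → ‖q.eval w‖ ≤ ε) := by
  set n : ℝ := R + 1 with hn
  have hnpos : 0 < n := by rw [hn]; linarith
  set θ : ℝ := max (1 - 2*n*d/(2*R+1)^2) 0 with hθ
  have hθ0 : 0 ≤ θ := le_max_right _ _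
  have hθge : 1 - 2*n*d/(2*R+1)^2 ≤ θ := le_max_left _ _
  have h2R : (0:ℝ) < (2*R+1)^2 := by positivity
  have hθ1 : θ < 1 := by
    rw [hθ, max_lt_iff]
    constructor
    · have : 0 < 2*n*d/(2*R+1)^2 := by positivity
      linarith
    · norm_num
  clear_value n θ
  -- choose M
  obtain ⟨M, hM⟩ := exists_pow_lt_of_lt_one
    (show (0:ℝ) < min (ε/4) (1/2) by positivity) hθ1
  have hMε : θ^M ≤ ε/4 := le_trans hM.le (min_le_left _ _)
  have hMhalf : θ^M ≤ 1/2 := le_trans hM.le (min_le_right _ _)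
  set N : ℕ := 2*M with hN
  have hN0 : N ≠ 0 := by
    rw [hN]
    rcases Nat.eq_zero_or_pos M with h|h
    · exfalso; rw [h] at hMhalf; norm_num at hMhalf
    · positivity
  set Dp : Polynomial ℂ :=
    (Polynomial.C (n:ℂ) + Polynomial.X)^N + (Polynomial.C (n:ℂ) - Polynomial.X)^N with hDp
  have hDeval : ∀ w : ℂ, Dp.eval w = ((n:ℂ) + w)^N + ((n:ℂ) - w)^N := by
    intro w; rw [hDp]; simp
  have hD0 : Dp ≠ 0 := by
    intro h
    have h2 : Dp.eval (n:ℂ) = 0 := by rw [h]; simp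
    rw [hDeval] at h2
    simp only [sub_self, zero_pow hN0, add_zero] at h2
    have hcast : ((n:ℂ) + (n:ℂ)) = ((2*n:ℝ):ℂ) := by push_cast; ring
    rw [hcast] at h2
    have h3 := pow_eq_zero_iff hN0 |>.mp h2
    exact (Complex.ofReal_ne_zero.mpr (by positivity : (2*n:ℝ) ≠ 0)) h3
  have habs2 : ∀ z : ℂ, ‖z‖^2 = z.re*z.re + z.im*z.im := by
    intro z
    rw [Complex.sq_norm, Complex.normSq_apply]
  have hroots : ∀ r ∈ Dp.roots, r.re = 0 := by
    intro r hr
    have h0 : Dp.eval r = 0 := (Polynomial.mem_roots hD0).mp hr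
    rw [hDeval] at h0
    have heq : ((n:ℂ) + r)^N = -(((n:ℂ) - r)^N) := by linear_combination h0
    have hnorm : ‖(n:ℂ) + r‖^N = ‖(n:ℂ) - r‖^N := by
      rw [← norm_pow, ← norm_pow, heq, norm_neg]
    have hnormeq : ‖(n:ℂ) + r‖ = ‖(n:ℂ) - r‖ := by
      rcases lt_trichotomy (‖(n:ℂ) + r‖) (‖(n:ℂ) - r‖) with h|h|h
      · exfalso
        have := pow_lt_pow_left₀ h (norm_nonneg _) hN0
        rw [hnorm] at this; exact lt_irrefl _ this
      · exact h
      · exfalso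
        have := pow_lt_pow_left₀ h (norm_nonneg _) hN0
        rw [hnorm] at this; exact lt_irrefl _ this
    have hsq : ‖(n:ℂ) + r‖^2 = ‖(n:ℂ) - r‖^2 := by rw [hnormeq]
    rw [habs2, habs2] at hsq
    simp only [Complex.add_re, Complex.add_im, Complex.sub_re, Complex.sub_im,
      Complex.ofReal_re, Complex.ofReal_im, zero_add, zero_sub] at hsq
    nlinarith [hsq, hnpos]
  -- factorization
  have hsplit : Polynomial.Splits Dp := IsAlgClosed.splits Dp
  have hfac := Polynomial.Splits.eq_prod_roots hsplit
  set lc : ℂ := Dp.leadingCoeff with hlcdef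
  have hlc : lc ≠ 0 := Polynomial.leadingCoeff_ne_zero.mpr hD0
  have hevalprod : ∀ w : ℂ, Dp.eval w = lc * ((Dp.roots.map (fun a => w - a)).prod) := by
    intro w
    conv_lhs => rw [hfac]
    rw [Polynomial.eval_mul, Polynomial.eval_C, Polynomial.eval_multiset_prod,
      Multiset.map_map]
    congr 1
    exact congrArg Multiset.prod (Multiset.map_congr rfl (fun a _ => by simp))
  set g : ℂ → ℂ := fun w => lc⁻¹ * ((Dp.roots.map (fun a => (w - a)⁻¹)).prod) with hgdef
  have hg : Apx R d g := apx_mul hR (apx_const _) (apx_multiset_prod hR hd _ hroots)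
  have hginv : ∀ w ∈ Sset R d, Dp.eval w * g w = 1 := by
    intro w hw
    have hprod : (Dp.roots.map (fun a => w - a)).prod
        * (Dp.roots.map (fun a => (w - a)⁻¹)).prod = 1 := by
      rw [← Multiset.prod_map_mul]
      have : Dp.roots.map (fun a => (w - a) * (w - a)⁻¹)
          = Dp.roots.map (fun _ => 1) := by
        apply Multiset.map_congr rfl
        intro a ha
        exact mul_inv_cancel₀ (Sset_re_ne hd hw (hroots a ha))
      rw [this]
      simp
    rw [hevalprod w, hgdef]
    calc lc * (Dp.roots.map (fun a => w - a)).prod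
        * (lc⁻¹ * (Dp.roots.map (fun a => (w - a)⁻¹)).prod)
        = (lc * lc⁻¹) * ((Dp.roots.map (fun a => w - a)).prod
          * (Dp.roots.map (fun a => (w - a)⁻¹)).prod) := by ring
      _ = 1 := by rw [mul_inv_cancel₀ hlc, hprod, one_mul]
  have hDne : ∀ w ∈ Sset R d, Dp.eval w ≠ 0 :=
    fun w hw => left_ne_zero_of_mul_eq_one (hginv w hw)
  have hgeq : ∀ w ∈ Sset R d, g w = (Dp.eval w)⁻¹ :=
    fun w hw => (inv_eq_of_mul_eq_one_right (hginv w hw)).symm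
  set rfun : ℂ → ℂ := fun w => ((n:ℂ) + w)^N * g w with hrdef
  have hr : Apx R d rfun := by
    have h1 : Apx R d (fun w => ((n:ℂ) + w)^N) := by
      have := apx_poly (R := R) (d := d) ((Polynomial.C (n:ℂ) + Polynomial.X)^N)
      simpa using this
    exact apx_mul hR h1 hg
  -- estimates
  obtain ⟨q, hq⟩ := hr (ε/2) (by positivity : (0:ℝ) < ε/2)
  refine ⟨q, ?_, ?_⟩
  · -- right side : |q - 1| ≤ ε
    intro w hwR hwre
    have hwS : w ∈ Sset R d := ⟨hwR, le_trans hwre (le_abs_self _)⟩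
    have hx : w.re ≤ R := le_trans (le_abs_self _) (le_trans (Complex.abs_re_le_norm w) hwR)
    have hw2 : w.re*w.re + w.im*w.im ≤ R^2 := by
      have h2 : ‖w‖^2 ≤ R^2 := pow_le_pow_left₀ (norm_nonneg w) hwR 2
      rw [habs2] at h2; exact h2
    set u : ℝ := ‖(n:ℂ) + w‖ with hu
    set v : ℝ := ‖(n:ℂ) - w‖ with hv
    have hu2 : u^2 = (n + w.re)*(n + w.re) + w.im*w.im := by
      rw [hu, habs2]; simp
    have hv2 : v^2 = (n - w.re)*(n - w.re) + w.im*w.im := by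
      rw [hv, habs2]; simp
    clear_value u v
    have hfrac : (2*n*d/(2*R+1)^2) * (2*R+1)^2 = 2*n*d := by field_simp
    have huB : u^2 ≤ (2*R+1)^2 := by
      rw [hu2, hn]; exact quadA hw2 hx hR
    have key1 : v^2 ≤ θ * u^2 := by
      have hsub : u^2 - v^2 = 4*n*w.re := by rw [hu2, hv2]; ring
      have h1θ : 1 - θ ≤ 2*n*d/(2*R+1)^2 := by linarith [hθge]
      have e1 : (1-θ)*u^2 ≤ (2*n*d/(2*R+1)^2)*u^2 :=
        mul_le_mul_of_nonneg_right h1θ (sq_nonneg u)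
      have e2 : (2*n*d/(2*R+1)^2)*u^2 ≤ 2*n*d := by
        calc (2*n*d/(2*R+1)^2)*u^2 ≤ (2*n*d/(2*R+1)^2)*(2*R+1)^2 :=
              mul_le_mul_of_nonneg_left huB (by positivity)
          _ = 2*n*d := hfrac
      have e3 : 2*n*d ≤ 4*n*w.re := by
        have h9 := mul_le_mul_of_nonneg_left hwre (by linarith : (0:ℝ) ≤ 4*n)
        calc 2*n*d = 4*n*(d/2) := by ring
          _ ≤ 4*n*w.re := h9
      have e0 : (1-θ)*u^2 = u^2 - θ*u^2 := by ring
      linarith [hsub, e1, e2, e3, e0]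
    have hu1 : 1 ≤ u := by
      have h1 : ((n:ℂ) + w).re = n + w.re := by simp
      have h2 : |((n:ℂ) + w).re| ≤ ‖(n:ℂ) + w‖ := by
        exact Complex.abs_re_le_norm _
      rw [h1, ← hu] at h2
      linarith [le_abs_self (n + w.re), hd, hwre, hR, hn.ge, hn.le]
    have huN : 1 ≤ u^N := one_le_pow₀ hu1
    have hvN : v^N ≤ θ^M * u^N := by
      have h1 : v^N = (v^2)^M := by rw [hN, pow_mul]
      have h2 : u^N = (u^2)^M := by rw [hN, pow_mul]
      rw [h1, h2, ← mul_pow]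
      exact pow_le_pow_left₀ (sq_nonneg v) key1 M
    have hDlow : (1 - θ^M) * u^N ≤ ‖Dp.eval w‖ := by
      have h3 : ‖((n:ℂ)+w)^N‖ - ‖-(((n:ℂ)-w)^N)‖ ≤ ‖((n:ℂ)+w)^N - -(((n:ℂ)-w)^N)‖ :=
        norm_sub_norm_le _ _
      rw [sub_neg_eq_add, norm_neg, norm_pow, norm_pow, ← hu, ← hv, ← hDeval w] at h3
      have e0 : (1-θ^M)*u^N = u^N - θ^M*u^N := by ring
      linarith [h3, hvN, e0]
    have hDpos : 0 < ‖Dp.eval w‖ := by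
      have : (0:ℝ) < (1 - θ^M) * u^N := mul_pos (by linarith) (by linarith)
      linarith [hDlow]
    have hdiff : rfun w - 1 = -(((n:ℂ) - w)^N) * (Dp.eval w)⁻¹ := by
      have hge := hgeq w hwS
      have hDw := hDne w hwS
      have expand : rfun w = ((n:ℂ)+w)^N * g w := rfl
      rw [expand, hge]
      have h1 : (1:ℂ) = Dp.eval w * (Dp.eval w)⁻¹ := (mul_inv_cancel₀ hDw).symm
      calc ((n:ℂ)+w)^N * (Dp.eval w)⁻¹ - 1
          = ((n:ℂ)+w)^N * (Dp.eval w)⁻¹ - Dp.eval w * (Dp.eval w)⁻¹ := by rw [← h1]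
        _ = (((n:ℂ)+w)^N - Dp.eval w) * (Dp.eval w)⁻¹ := by ring
        _ = -(((n:ℂ) - w)^N) * (Dp.eval w)⁻¹ := by rw [hDeval]; ring
    have hest : ‖rfun w - 1‖ ≤ ε/2 := by
      rw [hdiff, norm_mul, norm_neg, norm_pow, norm_inv, ← hv]
      have h4 : v^N * ‖Dp.eval w‖⁻¹ ≤ (θ^M * u^N) * ((1 - θ^M) * u^N)⁻¹ := by
        apply mul_le_mul hvN _ (inv_nonneg.mpr (norm_nonneg _))
          (mul_nonneg (pow_nonneg hθ0 M) (by linarith))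
        exact inv_anti₀ (mul_pos (by linarith) (by linarith)) hDlow
      have hbne : u^N ≠ 0 := by linarith
      have h5 : (θ^M * u^N) * ((1 - θ^M) * u^N)⁻¹ = θ^M / (1 - θ^M) := by
        rw [mul_inv]
        calc θ^M * u^N * ((1 - θ^M)⁻¹ * (u^N)⁻¹)
            = (θ^M * (1 - θ^M)⁻¹) * (u^N * (u^N)⁻¹) := by ring
          _ = θ^M / (1 - θ^M) := by
              rw [mul_inv_cancel₀ hbne, mul_one, div_eq_mul_inv]
      rw [h5] at h4
      have h6 : θ^M / (1 - θ^M) ≤ 2 * θ^M := by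
        rw [div_le_iff₀ (by linarith [hMhalf])]
        have hp : 0 ≤ θ^M * (1 - 2*θ^M) := mul_nonneg (pow_nonneg hθ0 M) (by linarith)
        linarith [hp]

      calc v^N * ‖Dp.eval w‖⁻¹ ≤ θ^M / (1-θ^M) := h4
        _ ≤ 2*θ^M := h6
        _ ≤ 2*(ε/4) := by linarith [hMε]
        _ = ε/2 := by ring
    have hrearr : q.eval w - 1 = (rfun w - 1) - (rfun w - q.eval w) := by ring
    calc ‖q.eval w - 1‖ = ‖(rfun w - 1) - (rfun w - q.eval w)‖ := by rw [hrearr]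
      _ ≤ ‖rfun w - 1‖ + ‖rfun w - q.eval w‖ := norm_sub_le _ _
      _ ≤ ε/2 + ε/2 := add_le_add hest (hq w hwS)
      _ = ε := by ring
  · -- left side : |q| ≤ ε
    intro w hwR hwre
    have hwS : w ∈ Sset R d := ⟨hwR, le_trans (by linarith) (neg_le_abs _)⟩
    have hx : -R ≤ w.re := by
      have h2 : |w.re| ≤ ‖w‖ := by exact Complex.abs_re_le_norm _
      linarith [neg_abs_le w.re, h2, hwR]
    have hw2 : w.re*w.re + w.im*w.im ≤ R^2 := by
      have h2 : ‖w‖^2 ≤ R^2 := pow_le_pow_left₀ (norm_nonneg w) hwR 2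
      rw [habs2] at h2; exact h2
    set u : ℝ := ‖(n:ℂ) + w‖ with hu
    set v : ℝ := ‖(n:ℂ) - w‖ with hv
    have hu2 : u^2 = (n + w.re)*(n + w.re) + w.im*w.im := by
      rw [hu, habs2]; simp
    have hv2 : v^2 = (n - w.re)*(n - w.re) + w.im*w.im := by
      rw [hv, habs2]; simp
    clear_value u v
    have hfrac : (2*n*d/(2*R+1)^2) * (2*R+1)^2 = 2*n*d := by field_simp
    have hvB : v^2 ≤ (2*R+1)^2 := by
      rw [hv2, hn]; exact quadB hw2 hx hR
    have key1 : u^2 ≤ θ * v^2 := by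
      have hsub : v^2 - u^2 = -(4*n*w.re) := by rw [hu2, hv2]; ring
      have h1θ : 1 - θ ≤ 2*n*d/(2*R+1)^2 := by linarith [hθge]
      have e1 : (1-θ)*v^2 ≤ (2*n*d/(2*R+1)^2)*v^2 :=
        mul_le_mul_of_nonneg_right h1θ (sq_nonneg v)
      have e2 : (2*n*d/(2*R+1)^2)*v^2 ≤ 2*n*d := by
        calc (2*n*d/(2*R+1)^2)*v^2 ≤ (2*n*d/(2*R+1)^2)*(2*R+1)^2 :=
              mul_le_mul_of_nonneg_left hvB (by positivity)
          _ = 2*n*d := hfrac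
      have e3 : 2*n*d ≤ -(4*n*w.re) := by
        have h9 := mul_le_mul_of_nonneg_left hwre (by linarith : (0:ℝ) ≤ 4*n)
        calc 2*n*d = -(4*n*(-(d/2))) := by ring
          _ ≤ -(4*n*w.re) := by linarith [h9]
      have e0 : (1-θ)*v^2 = v^2 - θ*v^2 := by ring
      linarith [hsub, e1, e2, e3, e0]
    have hv1 : 1 ≤ v := by
      have h1 : ((n:ℂ) - w).re = n - w.re := by simp
      have h2 : |((n:ℂ) - w).re| ≤ ‖(n:ℂ) - w‖ := by
        exact Complex.abs_re_le_norm _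
      rw [h1, ← hv] at h2
      linarith [le_abs_self (n - w.re), hd, hwre, hR, hn.ge, hn.le]
    have hvN : 1 ≤ v^N := one_le_pow₀ hv1
    have huN : u^N ≤ θ^M * v^N := by
      have h1 : u^N = (u^2)^M := by rw [hN, pow_mul]
      have h2 : v^N = (v^2)^M := by rw [hN, pow_mul]
      rw [h1, h2, ← mul_pow]
      exact pow_le_pow_left₀ (sq_nonneg u) key1 M
    have hDlow : (1 - θ^M) * v^N ≤ ‖Dp.eval w‖ := by
      have h3 : ‖((n:ℂ)-w)^N‖ - ‖-(((n:ℂ)+w)^N)‖ ≤ ‖((n:ℂ)-w)^N - -(((n:ℂ)+w)^N)‖ :=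
        norm_sub_norm_le _ _
      rw [sub_neg_eq_add, norm_neg, norm_pow, norm_pow, ← hu, ← hv] at h3
      rw [hDeval w]
      rw [show ((n:ℂ)-w)^N + ((n:ℂ)+w)^N = ((n:ℂ)+w)^N + ((n:ℂ)-w)^N by ring] at h3
      have e0 : (1-θ^M)*v^N = v^N - θ^M*v^N := by ring
      linarith [h3, huN, e0]
    have hDpos : 0 < ‖Dp.eval w‖ := by
      have : (0:ℝ) < (1 - θ^M) * v^N := mul_pos (by linarith) (by linarith)
      linarith [hDlow]
    have hval : rfun w = ((n:ℂ) + w)^N * (Dp.eval w)⁻¹ := by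
      have expand : rfun w = ((n:ℂ)+w)^N * g w := rfl
      rw [expand, hgeq w hwS]
    have hest : ‖rfun w‖ ≤ ε/2 := by
      rw [hval, norm_mul, norm_pow, norm_inv, ← hu]
      have h4 : u^N * ‖Dp.eval w‖⁻¹ ≤ (θ^M * v^N) * ((1 - θ^M) * v^N)⁻¹ := by
        apply mul_le_mul huN _ (inv_nonneg.mpr (norm_nonneg _))
          (mul_nonneg (pow_nonneg hθ0 M) (by linarith))
        exact inv_anti₀ (mul_pos (by linarith) (by linarith)) hDlow
      have hbne : v^N ≠ 0 := by linarith
      have h5 : (θ^M * v^N) * ((1 - θ^M) * v^N)⁻¹ = θ^M / (1 - θ^M) := by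
        rw [mul_inv]
        calc θ^M * v^N * ((1 - θ^M)⁻¹ * (v^N)⁻¹)
            = (θ^M * (1 - θ^M)⁻¹) * (v^N * (v^N)⁻¹) := by ring
          _ = θ^M / (1 - θ^M) := by
              rw [mul_inv_cancel₀ hbne, mul_one, div_eq_mul_inv]
      rw [h5] at h4
      have h6 : θ^M / (1 - θ^M) ≤ 2 * θ^M := by
        rw [div_le_iff₀ (by linarith [hMhalf])]
        have hp : 0 ≤ θ^M * (1 - 2*θ^M) := mul_nonneg (pow_nonneg hθ0 M) (by linarith)
        linarith [hp]

      calc u^N * ‖Dp.eval w‖⁻¹ ≤ θ^M / (1-θ^M) := h4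
        _ ≤ 2*θ^M := h6
        _ ≤ 2*(ε/4) := by linarith [hMε]
        _ = ε/2 := by ring
    have hrearr : q.eval w = rfun w - (rfun w - q.eval w) := by ring
    calc ‖q.eval w‖ = ‖rfun w - (rfun w - q.eval w)‖ := by conv_lhs => rw [hrearr]
      _ ≤ ‖rfun w‖ + ‖rfun w - q.eval w‖ := norm_sub_le _ _
      _ ≤ ε/2 + ε/2 := add_le_add hest (hq w hwS)
      _ = ε := by ring

open MvPolynomial in
set_option maxHeartbeats 1000000 in
lemma hull_case {N : ℕ} {K L : Set (Fin N → ℂ)} (hKc : IsCompact K) (hLc : IsCompact L)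
    (hKne : K.Nonempty)
    (f : MvPolynomial (Fin N) ℂ) (a b : ℂ) (dd Rr : ℝ) (hdd : 0 < dd) (hRr : 0 ≤ Rr)
    (hTK : ∀ x ∈ K, ‖a * eval x f + b‖ ≤ Rr ∧ dd/2 ≤ (a * eval x f + b).re)
    (hTL : ∀ x ∈ L, ‖a * eval x f + b‖ ≤ Rr ∧ (a * eval x f + b).re ≤ -(dd/2))
    (z : Fin N → ℂ) (hz : z ∈ polyHull (K ∪ L))
    (hz1 : ‖a * eval z f + b‖ ≤ Rr) (hz2 : dd/2 ≤ (a * eval z f + b).re) :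
    z ∈ polyHull K := by
  classical
  obtain ⟨x₀, hx₀⟩ := hKne
  intro p
  set MK := sSup ((fun x => ‖eval x p‖) '' K) with hMKdef
  set ML := sSup ((fun x => ‖eval x p‖) '' L) with hMLdef
  have hcont : Continuous fun x : Fin N → ℂ => ‖eval x p‖ :=
    (MvPolynomial.continuous_eval p).norm
  have hMK : ∀ x ∈ K, ‖eval x p‖ ≤ MK := fun x hx =>
    le_csSup ((hKc.image hcont).bddAbove) (Set.mem_image_of_mem _ hx)
  have hML : ∀ x ∈ L, ‖eval x p‖ ≤ ML := fun x hx =>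
    le_csSup ((hLc.image hcont).bddAbove) (Set.mem_image_of_mem _ hx)
  have hMK0 : 0 ≤ MK := le_trans (norm_nonneg _) (hMK x₀ hx₀)
  have hML0 : 0 ≤ ML := by
    rcases Set.eq_empty_or_nonempty L with hLe|⟨y₀, hy₀⟩
    · rw [hMLdef, hLe]; simp [Real.sSup_empty]
    · exact le_trans (norm_nonneg _) (hML y₀ hy₀)
  by_contra hcon
  push_neg at hcon
  set A := ‖eval z p‖ with hAdef
  have hA0 : 0 ≤ A := norm_nonneg _
  set s : ℝ := A + MK + ML + 1 with hsdef
  have hspos : 0 < s := by rw [hsdef]; linarith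
  set εv : ℝ := (A - MK)/(2*s) with hεv
  have hεpos : 0 < εv := by rw [hεv]; apply div_pos (by linarith) (by linarith)
  have hεs : εv * (2*s) = A - MK := by rw [hεv]; field_simp
  have hεhalf : εv ≤ 1/2 := by
    rw [hεv, div_le_iff₀ (by linarith)]
    nlinarith
  obtain ⟨q, hq1, hq2⟩ := star Rr dd hRr hdd hεpos
  set q' : Polynomial ℂ := q.comp (Polynomial.C a * Polynomial.X + Polynomial.C b) with hq'
  have hq'eval : ∀ w : ℂ, q'.eval w = q.eval (a*w + b) := by
    intro w; rw [hq', Polynomial.eval_comp]; simp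
  set F : MvPolynomial (Fin N) ℂ := Polynomial.eval₂ MvPolynomial.C f q' with hF
  have hFeval : ∀ x : Fin N → ℂ, eval x F = q'.eval (eval x f) := by
    intro x
    rw [hF]
    rw [Polynomial.hom_eval₂ q' (MvPolynomial.C : ℂ →+* MvPolynomial (Fin N) ℂ)
      (MvPolynomial.eval x) f]
    have hcomp : (MvPolynomial.eval x).comp (MvPolynomial.C : ℂ →+* MvPolynomial (Fin N) ℂ)
        = RingHom.id ℂ := by
      ext r; simp
    rw [hcomp]
    rfl
  -- bounds on the sup over K ∪ L
  have hmain := hz (p * F)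
  have hsup : sSup ((fun x => ‖eval x (p * F)‖) '' (K ∪ L))
      ≤ max (MK * (1 + εv)) (ML * εv) := by
    apply csSup_le ⟨_, Set.mem_image_of_mem _ (Set.mem_union_left _ hx₀)⟩
    rintro y ⟨x, hx, rfl⟩
    show ‖eval x (p * F)‖ ≤ max (MK * (1 + εv)) (ML * εv)
    have hxeval : ‖eval x (p * F)‖ = ‖eval x p‖ * ‖q.eval (a * eval x f + b)‖ := by
      rw [map_mul, norm_mul, hFeval, hq'eval]
    rcases hx with hx|hx
    · obtain ⟨hb1, hb2⟩ := hTK x hx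
      have hqb : ‖q.eval (a * eval x f + b)‖ ≤ 1 + εv := by
        have := hq1 _ hb1 hb2
        calc ‖q.eval (a * eval x f + b)‖
            = ‖(q.eval (a * eval x f + b) - 1) + 1‖ := by ring_nf
          _ ≤ ‖q.eval (a * eval x f + b) - 1‖ + ‖(1:ℂ)‖ := norm_add_le _ _
          _ ≤ εv + 1 := by simpa using add_le_add_right this 1
          _ = 1 + εv := by ring
      refine le_trans ?_ (le_max_left _ _)
      rw [hxeval]
      exact mul_le_mul (hMK x hx) hqb (norm_nonneg _) hMK0
    · obtain ⟨hb1, hb2⟩ := hTL x hx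
      have hqb : ‖q.eval (a * eval x f + b)‖ ≤ εv := hq2 _ hb1 hb2
      refine le_trans ?_ (le_max_right _ _)
      rw [hxeval]
      exact mul_le_mul (hML x hx) hqb (norm_nonneg _) hML0
  have hlhs : A * (1 - εv) ≤ ‖eval z (p * F)‖ := by
    have hqz : 1 - εv ≤ ‖q.eval (a * eval z f + b)‖ := by
      have := hq1 _ hz1 hz2
      have h9 : ‖(1:ℂ)‖ - ‖q.eval (a * eval z f + b)‖
          ≤ ‖(1:ℂ) - q.eval (a * eval z f + b)‖ := norm_sub_norm_le _ _
      rw [norm_sub_rev] at h9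
      simp only [norm_one] at h9
      linarith
    have : ‖eval z (p * F)‖ = A * ‖q.eval (a * eval z f + b)‖ := by
      rw [map_mul, norm_mul, hFeval, hq'eval, hAdef]
    rw [this]
    exact mul_le_mul_of_nonneg_left hqz hA0
  have hfinal : A * (1 - εv) ≤ max (MK * (1 + εv)) (ML * εv) :=
    le_trans hlhs (le_trans hmain hsup)
  rcases le_max_iff.mp hfinal with hc|hc
  · nlinarith [hεs, mul_le_mul_of_nonneg_left (show A + MK ≤ 2*s by rw [hsdef]; linarith)
      hεpos.le]
  · nlinarith [hεs, mul_le_mul_of_nonneg_left (show A + ML ≤ 2*s by rw [hsdef]; linarith)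
      hεpos.le]

end KallinAux

theorem stmt14 {N : ℕ} (K L : Set (Fin N → ℂ)) (f : MvPolynomial (Fin N) ℂ) (δ : ℝ)
    (hKc : IsCompact K) (hLc : IsCompact L)
    (hKpc : IsPolyConvex K) (hLpc : IsPolyConvex L) (hδ : 0 < δ)
    (hK : ∀ z ∈ K, 0 ≤ (eval z f).re) (hL : ∀ z ∈ L, (eval z f).re ≤ -δ) :
    IsPolyConvex (K ∪ L) := by
  classical
  rcases Set.eq_empty_or_nonempty K with hKe|hKne
  · rw [hKe, Set.empty_union]; exact hLpc
  rcases Set.eq_empty_or_nonempty L with hLe|hLne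
  · rw [hLe, Set.union_empty]; exact hKpc
  have hcont : ∀ p : MvPolynomial (Fin N) ℂ, Continuous fun x : Fin N → ℂ => ‖eval x p‖ :=
    fun p => (MvPolynomial.continuous_eval p).norm
  apply Set.Subset.antisymm
  · -- polyHull (K ∪ L) ⊆ K ∪ L
    intro z hz
    set R₀ := sSup ((fun x => ‖eval x f‖) '' (K ∪ L)) with hR₀
    have hfB : ∀ x ∈ K ∪ L, ‖eval x f‖ ≤ R₀ := fun x hx =>
      le_csSup (((hKc.union hLc).image (hcont f)).bddAbove) (Set.mem_image_of_mem _ hx)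
    obtain ⟨x₀, hx₀⟩ := hKne
    obtain ⟨y₀, hy₀⟩ := hLne
    have hR₀0 : 0 ≤ R₀ := le_trans (norm_nonneg _) (hfB x₀ (Set.mem_union_left _ hx₀))
    have hw₀ : ‖eval z f‖ ≤ R₀ := hz f
    have hdd : 0 < δ/2 := by linarith
    have hRr : (0:ℝ) ≤ R₀ + δ := by linarith
    have hrea : ∀ (w : ℂ) (t : ℝ), (w + (t:ℂ)).re = w.re + t := by
      intro w t; simp
    have hreb : ∀ (w : ℂ) (t : ℝ), ((-1) * w + (t:ℂ)).re = -w.re + t := by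
      intro w t; simp
    have hna : ∀ (w : ℂ) (t : ℝ), ‖w‖ ≤ R₀ → |t| ≤ δ → ‖(1:ℂ) * w + (t:ℂ)‖ ≤ R₀ + δ := by
      intro w t h1 h2
      rw [one_mul]
      calc ‖w + (t:ℂ)‖ ≤ ‖w‖ + ‖(t:ℂ)‖ := norm_add_le _ _
        _ ≤ R₀ + δ := by
            rw [Complex.norm_real, Real.norm_eq_abs]
            exact add_le_add h1 h2
    have hnb : ∀ (w : ℂ) (t : ℝ), ‖w‖ ≤ R₀ → |t| ≤ δ → ‖(-1:ℂ) * w + (t:ℂ)‖ ≤ R₀ + δ := by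
      intro w t h1 h2
      calc ‖(-1:ℂ) * w + (t:ℂ)‖ ≤ ‖(-1:ℂ) * w‖ + ‖(t:ℂ)‖ := norm_add_le _ _
        _ ≤ R₀ + δ := by
            rw [Complex.norm_real, Real.norm_eq_abs, norm_mul, norm_neg, norm_one, one_mul]
            exact add_le_add h1 h2
    have habs1 : |3*δ/4| ≤ δ := by rw [abs_of_nonneg (by linarith)]; linarith
    have habs2 : |-(δ/4)| ≤ δ := by rw [abs_of_nonpos (by linarith)]; linarith
    rcases le_or_gt (-(δ/2)) (eval z f).re with hcase|hcase
    · left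
      rw [IsPolyConvex] at hKpc
      rw [← hKpc]
      refine hull_case hKc hLc ⟨x₀, hx₀⟩ f 1 (((3*δ/4 : ℝ)):ℂ) (δ/2) (R₀ + δ) hdd hRr
        ?_ ?_ z hz ?_ ?_
      · intro x hx
        constructor
        · exact hna _ _ (hfB x (Set.mem_union_left _ hx)) habs1
        · rw [one_mul, hrea]
          have := hK x hx
          linarith
      · intro x hx
        constructor
        · exact hna _ _ (hfB x (Set.mem_union_right _ hx)) habs1
        · rw [one_mul, hrea]
          have := hL x hx
          linarith
      · exact hna _ _ hw₀ habs1
      · rw [one_mul, hrea]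
        linarith
    · right
      rw [IsPolyConvex] at hLpc
      rw [← hLpc]
      have hz' : z ∈ polyHull (L ∪ K) := by rwa [Set.union_comm L K]
      refine hull_case hLc hKc ⟨y₀, hy₀⟩ f (-1) (((-(δ/4) : ℝ)):ℂ) (δ/2) (R₀ + δ) hdd hRr
        ?_ ?_ z hz' ?_ ?_
      · intro x hx
        constructor
        · exact hnb _ _ (hfB x (Set.mem_union_right _ hx)) habs2
        · rw [hreb]
          have := hL x hx
          linarith
      · intro x hx
        constructor
        · exact hnb _ _ (hfB x (Set.mem_union_left _ hx)) habs2
        · rw [hreb]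
          have := hK x hx
          linarith
      · exact hnb _ _ hw₀ habs2
      · rw [hreb]
        linarith
  · -- K ∪ L ⊆ polyHull (K ∪ L)
    intro x hx p
    exact le_csSup (((hKc.union hLc).image (hcont p)).bddAbove) (Set.mem_image_of_mem _ hx)
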